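/- Let n be even, a_1,…,a_n positive integers with a_n ≥ 2, N = a_1 + ⋯ + a_n − 1 and l_{n−1} = a_1 + ⋯ + a_{n−1}. Then F[a_1,…,a_n] = (1 + y_N)·F[a_1,…,a_{n−1}, a_n − 1] − y_N·F[a_1,…,a_{n−1}, a_n − 2], and F[a_1,…,a_n] = (Π_{i=l_{n−1}}^{N−1} y_i)(1 + y_N)·F[a_1,…,a_{n−1}] + F[a_1,…,a_{n−1}, a_n − 2], with the convention F[a_1,…,a_{n−1}, 0] = F[a_1,…,a_{n−2}]. -/

import Mathlib

/-!
Ancestral triangles of continued fractions (Yamada / Farey diagrams),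
following "Cluster variables and Alexander polynomials of 2-bridge knots".
-/

noncomputable section

open scoped BigOperators

attribute [local instance] Classical.propDecidable

namespace TwoBridge

/-- The continued fraction `[a₁,…,aₙ] = 1/(a₁ + 1/(a₂ + ⋯ + 1/aₙ))`. -/
def cf : List ℕ → ℚ
  | [] => 0
  | a :: t => 1 / ((a : ℚ) + cf t)

/-- Partial sums `l_k = a₁ + ⋯ + a_k`. -/
def ell (a : List ℕ) (k : ℕ) : ℕ := (a.take k).sum

/-- The index of the fan containing the `i`-th triangle (1-based): the least `k` with
`i ≤ l_k − 1`.  Fan 1 consists of `T_1, …, T_{a₁−1}` and, for `k ≥ 2`, fan `k` consists of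
`T_{l_{k−1}}, …, T_{l_k − 1}`. -/
def fanIdx (a : List ℕ) (i : ℕ) : ℕ := sInf {k | i < ell a k}

/-- The `i`-th triangle (1-based) of the ancestral triangle of `[a₁,…,aₙ]` is a *right*
triangle iff it lies in an odd-indexed fan (first `a₁ − 1` triangles are right, the next
`a₂` left, the next `a₃` right, and so on alternately). -/
def isRight (a : List ℕ) (i : ℕ) : Prop := Odd (fanIdx a i)

/-- Vertex indices of the ancestral triangle: `0 ↦ 0/1`, `1 ↦ 1/1`, and `j + 1 ↦` the apex
(new vertex) of the triangle `T_j`.  `edgeIdx a i` is the pair of vertex indices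
(left endpoint, right endpoint) of the most recently created edge after stacking `i`
triangles; the triangle `T_{i+1}` is stacked on this edge. -/
def edgeIdx (a : List ℕ) : ℕ → ℕ × ℕ
  | 0 => (0, 1)
  | i + 1 => if isRight a (i + 1) then ((edgeIdx a i).1, i + 2) else (i + 2, (edgeIdx a i).2)

/-- The labels (numerator, denominator) of the endpoints of the active edge after stacking
`i` triangles; the new vertex of each triangle is labelled by the mediant of the two
endpoints of the edge it is stacked on. -/
def edgeLbl (a : List ℕ) : ℕ → (ℕ × ℕ) × (ℕ × ℕ)
  | 0 => ((0, 1), (1, 1))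
  | i + 1 =>
      if isRight a (i + 1) then
        ((edgeLbl a i).1,
          ((edgeLbl a i).1.1 + (edgeLbl a i).2.1, (edgeLbl a i).1.2 + (edgeLbl a i).2.2))
      else
        (((edgeLbl a i).1.1 + (edgeLbl a i).2.1, (edgeLbl a i).1.2 + (edgeLbl a i).2.2),
          (edgeLbl a i).2)

/-- The label (numerator, denominator) of the vertex with index `v`. -/
def vtxLabel (a : List ℕ) (v : ℕ) : ℕ × ℕ :=
  if v = 0 then (0, 1)
  else if v = 1 then (1, 1)
  else ((edgeLbl a (v - 2)).1.1 + (edgeLbl a (v - 2)).2.1,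
        (edgeLbl a (v - 2)).1.2 + (edgeLbl a (v - 2)).2.2)

/-- `u` and `w` are joined by an edge of the ancestral triangle. -/
def IsEdgeAT (a : List ℕ) (u w : ℕ) : Prop :=
  (u = 0 ∧ w = 1) ∨ (u = 1 ∧ w = 0) ∨
    (2 ≤ u ∧ (w = (edgeIdx a (u - 2)).1 ∨ w = (edgeIdx a (u - 2)).2)) ∨
    (2 ≤ w ∧ (u = (edgeIdx a (w - 2)).1 ∨ u = (edgeIdx a (w - 2)).2))

/-- A step of a path: an edge of the ancestral triangle along which the denominator of the
vertex label strictly decreases. -/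
def IsStep (a : List ℕ) (u w : ℕ) : Prop :=
  IsEdgeAT a u w ∧ (vtxLabel a w).2 < (vtxLabel a u).2

/-- `IsPathFrom a s γ` : `γ` is a path of the ancestral triangle of `a` starting at the
vertex with index `s` and ending at `0/1` or `1/1`, the denominator of the label strictly
decreasing along every edge. -/
def IsPathFrom (a : List ℕ) (s : ℕ) (γ : List ℕ) : Prop :=
  γ.head? = some s ∧ (γ.getLast? = some 0 ∨ γ.getLast? = some 1) ∧ List.Chain' (IsStep a) γ

/-- The (indices of the) triangles cut off to the left of the path by a single step from
vertex `u` down to vertex `w`. -/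
def stepLeft (a : List ℕ) (u w : ℕ) : Finset ℕ :=
  if 2 ≤ u ∧ w = (edgeIdx a (u - 2)).2 then Finset.Ioc (w - 1) (u - 1) else ∅

/-- The set `S_γ` of (indices of) triangles lying on the left side of the path `γ`. -/
def pathLeftSet (a : List ℕ) (γ : List ℕ) : Finset ℕ :=
  (γ.zip γ.tail).foldr (fun p s => stepLeft a p.1 p.2 ∪ s) ∅


/-- The `F`-polynomial `F_{p/q} = Σ_{γ ∈ Γ_{p/q}} ∏_{T_i ∈ S_γ} y_i` of `p/q = [a₁,…,aₙ]`
(the variable `y_i` is `MvPolynomial.X i`; the top vertex has index `a.sum = N + 1`).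
For the empty continued fraction this gives `1`. -/
def Fpoly (a : List ℕ) : MvPolynomial ℕ ℤ :=
  ∑ᶠ γ ∈ {γ : List ℕ | IsPathFrom a a.sum γ},
    ∏ i ∈ pathLeftSet a γ, (MvPolynomial.X i : MvPolynomial ℕ ℤ)

/-- `F`-polynomial with the convention `F[a₁,…,a_{n−1},0] = F[a₁,…,a_{n−2}]`. -/
def FpolyC (l : List ℕ) : MvPolynomial ℕ ℤ :=
  if l.getLast? = some 0 then Fpoly l.dropLast.dropLast else Fpoly l

/-! ### Auxiliary lemmas -/

/-- The path-sum function from an arbitrary start vertex. -/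
def Pfun (a : List ℕ) (s : ℕ) : MvPolynomial ℕ ℤ :=
  ∑ᶠ γ ∈ {γ : List ℕ | IsPathFrom a s γ},
    ∏ i ∈ pathLeftSet a γ, (MvPolynomial.X i : MvPolynomial ℕ ℤ)

lemma Fpoly_eq_Pfun (a : List ℕ) : Fpoly a = Pfun a a.sum := rfl

lemma edgeIdx_bound (a : List ℕ) (i : ℕ) :
    (edgeIdx a i).1 ≤ i + 1 ∧ (edgeIdx a i).2 ≤ i + 1 ∧ (edgeIdx a i).1 ≠ (edgeIdx a i).2 := by
  induction i with
  | zero => simp [edgeIdx]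
  | succ i ih =>
      rw [edgeIdx]
      split <;> simp <;> omega

lemma edgeLbl_eq_vtx (a : List ℕ) (i : ℕ) :
    edgeLbl a i = (vtxLabel a (edgeIdx a i).1, vtxLabel a (edgeIdx a i).2) := by
  induction i with
  | zero => simp [edgeLbl, edgeIdx, vtxLabel]
  | succ i ih =>
      have hv : vtxLabel a (i + 2) =
          ((edgeLbl a i).1.1 + (edgeLbl a i).2.1, (edgeLbl a i).1.2 + (edgeLbl a i).2.2) := by
        simp [vtxLabel]
      rw [edgeLbl, edgeIdx]
      split <;> simp [ih, hv] <;> rw [← ih]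

lemma den_pos (a : List ℕ) (v : ℕ) : 1 ≤ (vtxLabel a v).2 := by
  have h : ∀ i, 1 ≤ (edgeLbl a i).1.2 ∧ 1 ≤ (edgeLbl a i).2.2 := by
    intro i
    induction i with
    | zero => simp [edgeLbl]
    | succ i ih => rw [edgeLbl]; split <;> simp <;> omega
  unfold vtxLabel
  split
  · simp
  · split
    · simp
    · have := h (v - 2); omega

lemma den_apex (a : List ℕ) (i : ℕ) :
    (vtxLabel a (i + 2)).2 =
      (vtxLabel a (edgeIdx a i).1).2 + (vtxLabel a (edgeIdx a i).2).2 := by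
  have : vtxLabel a (i + 2) =
      ((edgeLbl a i).1.1 + (edgeLbl a i).2.1, (edgeLbl a i).1.2 + (edgeLbl a i).2.2) := by
    simp [vtxLabel]
  rw [this, edgeLbl_eq_vtx]

lemma den_succ_lt (a : List ℕ) (v : ℕ) (hv : 2 ≤ v) :
    (vtxLabel a v).2 < (vtxLabel a (v + 1)).2 := by
  obtain ⟨i, rfl⟩ : ∃ i, v = i + 2 := ⟨v - 2, by omega⟩
  have h1 := den_apex a i
  have h2 := den_apex a (i + 1)
  have h3 : edgeIdx a (i + 1) = if isRight a (i + 1) then ((edgeIdx a i).1, i + 2)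
      else (i + 2, (edgeIdx a i).2) := rfl
  by_cases hr : isRight a (i + 1) <;> simp [hr] at h3 <;>
    rw [h3] at h2 <;> simp at h2 <;> rw [h2]
  · have := den_pos a (edgeIdx a i).1; omega
  · have := den_pos a (edgeIdx a i).2; omega

lemma den_lt_of_lt (a : List ℕ) {u w : ℕ} (hu : 2 ≤ u) (huw : u < w) :
    (vtxLabel a u).2 < (vtxLabel a w).2 := by
  induction w with
  | zero => omega
  | succ w ih =>
      rcases Nat.lt_or_ge u w with h | h
      · exact lt_trans (ih h) (den_succ_lt a w (by omega))
      · have : u = w := by omega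
        subst this
        exact den_succ_lt a u hu

lemma den_low (a : List ℕ) {v : ℕ} (h : v ≤ 1) : (vtxLabel a v).2 = 1 := by
  interval_cases v <;> simp [vtxLabel]

lemma den_ge_two (a : List ℕ) {v : ℕ} (h : 2 ≤ v) : 2 ≤ (vtxLabel a v).2 := by
  obtain ⟨i, rfl⟩ : ∃ i, v = i + 2 := ⟨v - 2, by omega⟩
  have := den_apex a i
  have h1 := den_pos a (edgeIdx a i).1
  have h2 := den_pos a (edgeIdx a i).2
  omega

lemma not_isStep_low (a : List ℕ) {u w : ℕ} (h : u ≤ 1) : ¬ IsStep a u w := by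
  intro ⟨_, hlt⟩
  have := den_pos a w
  rw [den_low a h] at hlt
  omega

lemma isStep_iff (a : List ℕ) {s : ℕ} (hs : 2 ≤ s) (w : ℕ) :
    IsStep a s w ↔ (w = (edgeIdx a (s - 2)).1 ∨ w = (edgeIdx a (s - 2)).2) := by
  constructor
  · rintro ⟨hedge, hlt⟩
    rcases hedge with ⟨h0, _⟩ | ⟨h0, _⟩ | ⟨_, h⟩ | ⟨hw2, h⟩
    · omega
    · omega
    · exact h
    · exfalso
      have hb := edgeIdx_bound a (w - 2)
      have hsw : s ≤ w - 1 := by rcases h with h | h <;> omega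
      have : (vtxLabel a s).2 < (vtxLabel a w).2 := den_lt_of_lt a hs (by omega)
      omega
  · intro h
    refine ⟨Or.inr (Or.inr (Or.inl ⟨hs, h⟩)), ?_⟩
    have hda := den_apex a (s - 2)
    have hs2 : s - 2 + 2 = s := by omega
    rw [hs2] at hda
    have h1 := den_pos a (edgeIdx a (s - 2)).1
    have h2 := den_pos a (edgeIdx a (s - 2)).2
    rcases h with rfl | rfl <;> omega
lemma pathSet_low (a : List ℕ) {v : ℕ} (hv : v ≤ 1) :
    {γ : List ℕ | IsPathFrom a v γ} = {[v]} := by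
  ext γ
  simp only [Set.mem_setOf_eq, Set.mem_singleton_iff]
  constructor
  · rintro ⟨hhead, hlast, hchain⟩
    cases γ with
    | nil => simp at hhead
    | cons x t =>
        simp at hhead
        subst hhead
        cases t with
        | nil => rfl
        | cons w t' =>
            exfalso
            exact not_isStep_low a hv (List.isChain_cons_cons.mp hchain).1
  · rintro rfl
    refine ⟨rfl, ?_, ?_⟩
    · simp; omega
    · exact List.isChain_singleton _

lemma pathSet_rec (a : List ℕ) {s : ℕ} (hs : 2 ≤ s) :
    {γ : List ℕ | IsPathFrom a s γ} =
      (fun t => s :: t) ''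
        ({γ : List ℕ | IsPathFrom a (edgeIdx a (s - 2)).1 γ} ∪
          {γ : List ℕ | IsPathFrom a (edgeIdx a (s - 2)).2 γ}) := by
  ext γ
  simp only [Set.mem_setOf_eq, Set.mem_image, Set.mem_union]
  constructor
  · rintro ⟨hhead, hlast, hchain⟩
    cases γ with
    | nil => simp at hhead
    | cons x t =>
      simp at hhead
      subst hhead
      cases t with
      | nil =>
          exfalso
          simp [List.getLast?] at hlast
          omega
      | cons w t' =>
          have hstep := (List.isChain_cons_cons.mp hchain).1
          have hchain' : List.Chain' (IsStep a) (w :: t') := (List.isChain_cons_cons.mp hchain).2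
          have hlast' : (w :: t').getLast? = some 0 ∨ (w :: t').getLast? = some 1 := by
            simpa [List.getLast?_cons_cons] using hlast
          have hw := (isStep_iff a hs w).mp hstep
          refine ⟨w :: t', ?_, rfl⟩
          rcases hw with rfl | rfl
          · exact Or.inl ⟨rfl, hlast', hchain'⟩
          · exact Or.inr ⟨rfl, hlast', hchain'⟩
  · rintro ⟨t, ht, rfl⟩
    have h : ∃ w, t.head? = some w ∧
        (w = (edgeIdx a (s - 2)).1 ∨ w = (edgeIdx a (s - 2)).2) ∧ IsPathFrom a w t := by
      rcases ht with ⟨hh, hl, hc⟩ | ⟨hh, hl, hc⟩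
      · exact ⟨_, hh, Or.inl rfl, hh, hl, hc⟩
      · exact ⟨_, hh, Or.inr rfl, hh, hl, hc⟩
    obtain ⟨w, hw, hwe, hh, hl, hc⟩ := h
    cases t with
    | nil => simp at hw
    | cons x t' =>
      simp at hw
      subst hw
      refine ⟨rfl, by simpa [List.getLast?_cons_cons] using hl, ?_⟩
      exact List.isChain_cons_cons.mpr ⟨(isStep_iff a hs _).mpr hwe, hc⟩

lemma pathSet_finite (a : List ℕ) (s : ℕ) : {γ : List ℕ | IsPathFrom a s γ}.Finite := by
  induction s using Nat.strong_induction_on with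
  | _ s ih =>
    rcases Nat.lt_or_ge s 2 with h | h
    · rw [pathSet_low a (by omega)]; exact Set.finite_singleton _
    · rw [pathSet_rec a h]
      have hb := edgeIdx_bound a (s - 2)
      exact ((ih _ (by omega)).union (ih _ (by omega))).image _
lemma pathLeftSet_cons (a : List ℕ) (s w : ℕ) (t : List ℕ) :
    pathLeftSet a (s :: w :: t) = stepLeft a s w ∪ pathLeftSet a (w :: t) := rfl

lemma pathLeftSet_single (a : List ℕ) (s : ℕ) : pathLeftSet a [s] = ∅ := rfl

lemma stepLeft_subset (a : List ℕ) (u w : ℕ) :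
    stepLeft a u w ⊆ Finset.Ioc (w - 1) (u - 1) := by
  unfold stepLeft
  split
  · exact subset_rfl
  · simp

lemma pathLeftSet_subset (a : List ℕ) (γ : List ℕ) :
    ∀ w, IsPathFrom a w γ → pathLeftSet a γ ⊆ Finset.Iio w := by
  induction γ with
  | nil => intro w h; simp [IsPathFrom] at h
  | cons x t ih =>
      intro w ⟨hh, hl, hc⟩
      simp at hh
      subst hh
      cases t with
      | nil => rw [pathLeftSet_single]; simp
      | cons w' t' =>
          have hstep := (List.isChain_cons_cons.mp hc).1
          have hx2 : 2 ≤ x := by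
            by_contra h
            exact not_isStep_low a (by omega) hstep
          have hw' := (isStep_iff a hx2 w').mp hstep
          have hb := edgeIdx_bound a (x - 2)
          have hw'x : w' < x := by rcases hw' with rfl | rfl <;> omega
          rw [pathLeftSet_cons]
          apply Finset.union_subset
          · intro i hi
            have := stepLeft_subset a x w' hi
            simp at this ⊢
            omega
          · have ht : IsPathFrom a w' (w' :: t') :=
              ⟨rfl, by simpa [List.getLast?_cons_cons] using hl, (List.isChain_cons_cons.mp hc).2⟩
            intro i hi
            have := ih w' ht hi
            simp at this ⊢
            omega

lemma stepLeft_disjoint (a : List ℕ) (s w : ℕ) :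
    Disjoint (stepLeft a s w) (Finset.Iio w) := by
  rw [Finset.disjoint_left]
  intro i hi hi'
  have := stepLeft_subset a s w hi
  simp at this hi'
  omega

lemma prod_cons (a : List ℕ) {w : ℕ} (s : ℕ) {t : List ℕ} (ht : IsPathFrom a w t) :
    (∏ i ∈ pathLeftSet a (s :: t), (MvPolynomial.X i : MvPolynomial ℕ ℤ)) =
      (∏ i ∈ stepLeft a s w, (MvPolynomial.X i : MvPolynomial ℕ ℤ)) *
        ∏ i ∈ pathLeftSet a t, (MvPolynomial.X i : MvPolynomial ℕ ℤ) := by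
  obtain ⟨hh, hl, hc⟩ := ht
  cases t with
  | nil => simp at hh
  | cons x t' =>
      simp at hh
      subst hh
      rw [pathLeftSet_cons]
      rw [Finset.prod_union]
      exact Finset.disjoint_of_subset_right (pathLeftSet_subset a _ _ ⟨rfl, hl, hc⟩)
        (stepLeft_disjoint a s _)

lemma pfun_low (a : List ℕ) {v : ℕ} (hv : v ≤ 1) : Pfun a v = 1 := by
  unfold Pfun
  rw [pathSet_low a hv, finsum_mem_singleton, pathLeftSet_single, Finset.prod_empty]

lemma pfun_rec (a : List ℕ) {s : ℕ} (hs : 2 ≤ s) :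
    Pfun a s =
      (∏ i ∈ stepLeft a s (edgeIdx a (s - 2)).1, (MvPolynomial.X i : MvPolynomial ℕ ℤ)) *
          Pfun a (edgeIdx a (s - 2)).1 +
        (∏ i ∈ stepLeft a s (edgeIdx a (s - 2)).2, (MvPolynomial.X i : MvPolynomial ℕ ℤ)) *
          Pfun a (edgeIdx a (s - 2)).2 := by
  classical
  set e1 := (edgeIdx a (s - 2)).1 with he1
  set e2 := (edgeIdx a (s - 2)).2 with he2
  have hne : e1 ≠ e2 := (edgeIdx_bound a (s - 2)).2.2
  have hS1 := pathSet_finite a e1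
  have hS2 := pathSet_finite a e2
  have hdisj : Disjoint {γ : List ℕ | IsPathFrom a e1 γ} {γ : List ℕ | IsPathFrom a e2 γ} := by
    rw [Set.disjoint_left]
    rintro γ ⟨h1, _⟩ ⟨h2, _⟩
    rw [h1] at h2
    exact hne (by simpa using h2)
  have hinj : Set.InjOn (fun t => s :: t)
      ({γ : List ℕ | IsPathFrom a e1 γ} ∪ {γ : List ℕ | IsPathFrom a e2 γ}) := by
    intro x _ y _ h
    simpa using h
  unfold Pfun
  rw [pathSet_rec a hs, ← he1, ← he2, finsum_mem_image hinj,
    finsum_mem_union hdisj hS1 hS2]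
  congr 1
  · rw [← Set.Finite.coe_toFinset hS1, finsum_mem_coe_finset, finsum_mem_coe_finset,
      Finset.mul_sum]
    refine Finset.sum_congr rfl fun t ht => ?_
    exact prod_cons a s ((hS1.mem_toFinset).mp ht)
  · rw [← Set.Finite.coe_toFinset hS2, finsum_mem_coe_finset, finsum_mem_coe_finset,
      Finset.mul_sum]
    refine Finset.sum_congr rfl fun t ht => ?_
    exact prod_cons a s ((hS2.mem_toFinset).mp ht)

lemma pfun_congr (a b : List ℕ) (v : ℕ)
    (h : ∀ i, i + 2 ≤ v → edgeIdx a i = edgeIdx b i) : Pfun a v = Pfun b v := by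
  induction v using Nat.strong_induction_on with
  | _ v ih =>
    rcases Nat.lt_or_ge v 2 with hv | hv
    · rw [pfun_low a (by omega), pfun_low b (by omega)]
    · have he : edgeIdx a (v - 2) = edgeIdx b (v - 2) := h _ (by omega)
      have hb := edgeIdx_bound a (v - 2)
      have hbb := edgeIdx_bound b (v - 2)
      have hsl : ∀ w, stepLeft a v w = stepLeft b v w := by
        intro w
        unfold stepLeft
        rw [he]
      rw [pfun_rec a hv, pfun_rec b hv, he, hsl, hsl,
        ih _ (by omega) (fun i hi => h i (by omega)),
        ih _ (by omega) (fun i hi => h i (by omega))]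
lemma ell_mono (a : List ℕ) {k m : ℕ} (h : k ≤ m) : ell a k ≤ ell a m := by
  unfold ell
  have := List.sum_take_add_sum_drop (a.take m) k
  rw [List.take_take, min_eq_left h] at this
  omega

lemma ell_length (a : List ℕ) {k : ℕ} (h : a.length ≤ k) : ell a k = a.sum := by
  unfold ell
  rw [List.take_of_length_le h]

lemma ell_append (b c : List ℕ) {k : ℕ} (h : k ≤ b.length) :
    ell (b ++ c) k = ell b k := by
  unfold ell
  rw [List.take_append, show k - b.length = 0 by omega]
  simp

lemma fanIdx_eq (a : List ℕ) {k i : ℕ} (hk : 1 ≤ k) (h1 : ell a (k - 1) ≤ i)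
    (h2 : i < ell a k) : fanIdx a i = k := by
  unfold fanIdx
  have hmem : k ∈ {m | i < ell a m} := h2
  refine le_antisymm (Nat.sInf_le hmem) ?_
  refine le_csInf ⟨k, hmem⟩ fun m hm => ?_
  by_contra hc
  have : ell a m ≤ ell a (k - 1) := ell_mono a (by omega)
  exact absurd hm (by simp only [Set.mem_setOf_eq]; omega)

lemma fanIdx_append (b c : List ℕ) {j : ℕ} (hj : j < b.sum) :
    fanIdx (b ++ c) j = fanIdx b j := by
  unfold fanIdx
  have hlb : b.length ∈ {k | j < ell b k} := by
    simp only [Set.mem_setOf_eq, ell_length b le_rfl]; exact hj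
  have hla : b.length ∈ {k | j < ell (b ++ c) k} := by
    simp only [Set.mem_setOf_eq, ell_append b c le_rfl, ell_length b le_rfl]; exact hj
  have h1 : sInf {k | j < ell (b ++ c) k} ≤ b.length := Nat.sInf_le hla
  have h2 : sInf {k | j < ell b k} ≤ b.length := Nat.sInf_le hlb
  have m1 : sInf {k | j < ell (b ++ c) k} ∈ {k | j < ell (b ++ c) k} := csInf_mem ⟨_, hla⟩
  have m2 : sInf {k | j < ell b k} ∈ {k | j < ell b k} := csInf_mem ⟨_, hlb⟩
  simp only [Set.mem_setOf_eq] at m1 m2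
  refine le_antisymm (Nat.sInf_le ?_) (Nat.sInf_le ?_) <;> simp only [Set.mem_setOf_eq]
  · rwa [ell_append b c h2]
  · rwa [← ell_append b c h1]

lemma edgeIdx_congr (a b : List ℕ) (i : ℕ)
    (h : ∀ j, j ≤ i → fanIdx a j = fanIdx b j) : edgeIdx a i = edgeIdx b i := by
  induction i with
  | zero => rfl
  | succ i ih =>
      have hih := ih fun j hj => h j (by omega)
      rw [edgeIdx, edgeIdx, hih]
      have : isRight a (i + 1) ↔ isRight b (i + 1) := by
        unfold isRight
        rw [h (i + 1) le_rfl]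
      by_cases hr : isRight a (i + 1)
      · rw [if_pos hr, if_pos (this.mp hr)]
      · rw [if_neg hr, if_neg (fun hb' => hr (this.mpr hb'))]

lemma sum_pos_list {l : List ℕ} (hl : l ≠ []) (hpos : ∀ y ∈ l, 0 < y) : 1 ≤ l.sum := by
  cases l with
  | nil => simp at hl
  | cons x t => have := hpos x (by simp); simp; omega

lemma dropLast_sum_lt {l : List ℕ} (hl : l ≠ []) (hpos : ∀ y ∈ l, 0 < y) :
    l.dropLast.sum < l.sum := by
  conv_rhs => rw [← List.dropLast_append_getLast hl]
  rw [List.sum_append]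
  have := hpos (l.getLast hl) (List.getLast_mem hl)
  simp
  omega

lemma ell_eq_dropLast (l : List ℕ) : ell l (l.length - 1) = l.dropLast.sum := by
  unfold ell
  rw [List.dropLast_eq_take]
lemma edgeIdx_succ (a : List ℕ) (i : ℕ) :
    edgeIdx a (i + 1) =
      if isRight a (i + 1) then ((edgeIdx a i).1, i + 2) else (i + 2, (edgeIdx a i).2) := rfl

lemma pos_len_le_sum {l : List ℕ} (hpos : ∀ y ∈ l, 0 < y) : l.length ≤ l.sum := by
  induction l with
  | nil => simp
  | cons y t ih =>
      have hy := hpos y (by simp)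
      have := ih fun z hz => hpos z (by simp [hz])
      simp
      omega

lemma ell_dropLast_eq {l : List ℕ} (hne : l ≠ []) {k : ℕ} (hk : k ≤ l.dropLast.length) :
    ell l k = ell l.dropLast k := by
  conv_lhs => rw [← List.dropLast_append_getLast hne]
  exact ell_append _ _ hk

section Fan

variable (as : List ℕ) (x : ℕ)

lemma fan_last (hx : 1 ≤ x) {j : ℕ} (h1 : as.sum ≤ j) (h2 : j < as.sum + x) :
    fanIdx (as ++ [x]) j = as.length + 1 := by
  refine fanIdx_eq _ (by omega) ?_ ?_
  · rw [Nat.add_sub_cancel, ell_append _ _ le_rfl, ell_length _ le_rfl]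
    exact h1
  · rw [ell_length _ (by simp), List.sum_append]
    simpa using h2

lemma fan_prev {j : ℕ} (hj : j < as.sum) :
    fanIdx (as ++ [x]) j = fanIdx as j := fanIdx_append as [x] hj

lemma notRight_last (hodd : Odd as.length) (hx : 1 ≤ x) {j : ℕ} (h1 : as.sum ≤ j)
    (h2 : j < as.sum + x) : ¬ isRight (as ++ [x]) j := by
  unfold isRight
  rw [fan_last as x hx h1 h2]
  rcases hodd with ⟨c, hc⟩
  rintro ⟨d, hd⟩
  omega

lemma isRight_fan_n (hodd : Odd as.length) {j : ℕ}
    (hj2 : as.dropLast.sum ≤ j) (hj3 : j < as.sum) : isRight (as ++ [x]) j := by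
  have hlen : 1 ≤ as.length := by rcases hodd with ⟨c, hc⟩; omega
  unfold isRight
  rw [fan_prev as x hj3]
  rw [fanIdx_eq as hlen (by rw [ell_eq_dropLast]; exact hj2)
    (by rw [ell_length as le_rfl]; exact hj3)]
  exact hodd

lemma notRight_fan_prev (hpos : ∀ y ∈ as, 0 < y) (hodd : Odd as.length)
    (hlen : 2 ≤ as.length) {j : ℕ} (hj2 : as.dropLast.dropLast.sum ≤ j)
    (hj3 : j < as.dropLast.sum) : ¬ isRight (as ++ [x]) j := by
  have hne : as ≠ [] := by intro h; rw [h] at hlen; simp at hlen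
  have hdll : as.dropLast.sum < as.sum := dropLast_sum_lt hne hpos
  unfold isRight
  rw [fan_prev as x (by omega)]
  have hell2 : ell as (as.length - 2) = as.dropLast.dropLast.sum := by
    rw [ell_dropLast_eq hne (by simp; omega),
      show as.length - 2 = as.dropLast.length - 1 by simp; omega, ell_eq_dropLast]
  have hf : fanIdx as j = as.length - 1 := by
    refine fanIdx_eq as (by omega) ?_ ?_
    · rwa [show as.length - 1 - 1 = as.length - 2 by omega, hell2]
    · rwa [ell_eq_dropLast]
  rw [hf]
  rcases hodd with ⟨c, hc⟩
  rintro ⟨d, hd⟩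
  omega

lemma edgeIdx_snd_base (hpos : ∀ y ∈ as, 0 < y) (hodd : Odd as.length) :
    (edgeIdx (as ++ [x]) (as.sum - 1)).2 = as.sum := by
  have hne : as ≠ [] := by
    intro h; rcases hodd with ⟨c, hc⟩; rw [h] at hc; simp at hc
  have hL : 1 ≤ as.sum := sum_pos_list hne hpos
  have hdl : as.dropLast.sum < as.sum := dropLast_sum_lt hne hpos
  rcases Nat.lt_or_ge as.sum 2 with h2 | h2
  · have : as.sum - 1 = 0 := by omega
    rw [this]
    show (0, 1).2 = as.sum
    simp; omega
  · have he := edgeIdx_succ (as ++ [x]) (as.sum - 2)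
    rw [show as.sum - 2 + 1 = as.sum - 1 by omega] at he
    rw [he, if_pos (isRight_fan_n as x hodd (by omega) (by omega))]
    simp
    omega

lemma edgeIdx_spine (hpos : ∀ y ∈ as, 0 < y) (hodd : Odd as.length) (hx : 1 ≤ x) :
    ∀ k, k ≤ x - 1 → edgeIdx (as ++ [x]) (as.sum + k) = (as.sum + k + 1, as.sum) := by
  have hne : as ≠ [] := by
    intro h; rcases hodd with ⟨c, hc⟩; rw [h] at hc; simp at hc
  have hL : 1 ≤ as.sum := sum_pos_list hne hpos
  intro k hk
  induction k with
  | zero =>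
      have he := edgeIdx_succ (as ++ [x]) (as.sum - 1)
      rw [show as.sum - 1 + 1 = as.sum by omega] at he
      rw [show as.sum + 0 = as.sum by omega, he,
        if_neg (notRight_last as x hodd hx le_rfl (by omega)),
        edgeIdx_snd_base as x hpos hodd]
      congr 1
      omega
  | succ k ih =>
      have he := edgeIdx_succ (as ++ [x]) (as.sum + k)
      rw [show as.sum + k + 1 = as.sum + (k + 1) by omega] at he
      rw [he, if_neg (notRight_last as x hodd hx (by omega) (by omega)),
        ih (by omega), show as.sum + k + 2 = as.sum + (k + 1) + 1 by omega]

lemma edgeIdx_fst_base (hpos : ∀ y ∈ as, 0 < y) (hodd : Odd as.length) :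
    (edgeIdx (as ++ [x]) (as.sum - 1)).1 = as.dropLast.sum := by
  have hne : as ≠ [] := by
    intro h; rcases hodd with ⟨c, hc⟩; rw [h] at hc; simp at hc
  have hL : 1 ≤ as.sum := sum_pos_list hne hpos
  have hdl : as.dropLast.sum < as.sum := dropLast_sum_lt hne hpos
  set L' := as.dropLast.sum with hL'
  have hconst : ∀ m, L' - 1 + m ≤ as.sum - 1 →
      (edgeIdx (as ++ [x]) (L' - 1 + m)).1 = (edgeIdx (as ++ [x]) (L' - 1)).1 := by
    intro m
    induction m with
    | zero => intro _; rfl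
    | succ m ih =>
        intro hm
        have he := edgeIdx_succ (as ++ [x]) (L' - 1 + m)
        rw [show L' - 1 + m + 1 = L' - 1 + (m + 1) by omega] at he
        rw [he, if_pos (isRight_fan_n as x hodd (by omega) (by omega))]
        exact ih (by omega)
  have hmain := hconst (as.sum - 1 - (L' - 1)) (by omega)
  rw [show L' - 1 + (as.sum - 1 - (L' - 1)) = as.sum - 1 by omega] at hmain
  rw [hmain]
  rcases Nat.lt_or_ge as.length 2 with hlen | hlen
  · -- as is a singleton, L' = 0
    have h0 : L' = 0 := by
      rcases hodd with ⟨c, hc⟩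
      have h1 : as.length = 1 := by omega
      have : as.dropLast.length = 0 := by simp [h1]
      have : as.dropLast = [] := List.length_eq_zero_iff.mp this
      rw [hL', this]
      simp
    rw [h0]
    rfl
  · have hlen3 : 3 ≤ as.length := by rcases hodd with ⟨c, hc⟩; omega
    have hdne : as.dropLast ≠ [] := by
      intro h
      have := congrArg List.length h
      simp at this
      omega
    have hdpos : ∀ y ∈ as.dropLast, 0 < y := fun y hy => hpos y (List.dropLast_subset _ hy)
    have hL'2 : 2 ≤ L' := by
      have := pos_len_le_sum hdpos
      have : as.dropLast.length = as.length - 1 := by simp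
      have := pos_len_le_sum hdpos
      omega
    have hdl2 : as.dropLast.dropLast.sum < L' := dropLast_sum_lt hdne hdpos
    have he := edgeIdx_succ (as ++ [x]) (L' - 2)
    rw [show L' - 2 + 1 = L' - 1 by omega] at he
    rw [he, if_neg (notRight_fan_prev as x hpos hodd hlen (by omega) (by omega))]
    simp
    omega

end Fan
section Transfer

variable (as : List ℕ) (x : ℕ)

lemma pfun_prev (v : ℕ) (hv : v ≤ as.sum + 1) :
    Pfun (as ++ [x]) v = Pfun as v := by
  refine pfun_congr _ _ v fun i hi => edgeIdx_congr _ _ i fun j hj => ?_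
  exact fan_prev as x (by omega)

lemma pfun_dropLast (hne : as ≠ []) (v : ℕ) (hv : v ≤ as.dropLast.sum + 1) :
    Pfun (as ++ [x]) v = Pfun as.dropLast v := by
  refine pfun_congr _ _ v fun i hi => edgeIdx_congr _ _ i fun j hj => ?_
  have hsplit : as ++ [x] = as.dropLast ++ ([as.getLast hne] ++ [x]) := by
    conv_lhs => rw [← List.dropLast_append_getLast hne]
    rw [List.append_assoc]
  rw [hsplit]
  exact fanIdx_append as.dropLast _ (by omega)

lemma pfun_xx (hodd : Odd as.length) (hx : 1 ≤ x) (v : ℕ) (hv : v ≤ as.sum + x + 1) :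
    Pfun (as ++ [x]) v = Pfun (as ++ [x + 1]) v := by
  refine pfun_congr _ _ v fun i hi => edgeIdx_congr _ _ i fun j hj => ?_
  rcases Nat.lt_or_ge j as.sum with h | h
  · rw [fan_prev as x h, fan_prev as (x + 1) h]
  · rw [fan_last as x hx h (by omega), fan_last as (x + 1) (by omega) h (by omega)]

end Transfer

lemma Fpoly_closed (as : List ℕ) (hpos : ∀ y ∈ as, 0 < y) (hodd : Odd as.length) :
    ∀ x, 1 ≤ x →
      Fpoly (as ++ [x]) =
        (∑ k ∈ Finset.range x,
            ∏ i ∈ Finset.Icc as.sum (as.sum + k), (MvPolynomial.X i : MvPolynomial ℕ ℤ)) *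
            Fpoly as +
          Fpoly as.dropLast := by
  intro x hx
  have hne : as ≠ [] := by
    intro h; rcases hodd with ⟨c, hc⟩; rw [h] at hc; simp at hc
  have hL : 1 ≤ as.sum := sum_pos_list hne hpos
  have hdl : as.dropLast.sum < as.sum := dropLast_sum_lt hne hpos
  induction x, hx using Nat.le_induction with
  | base =>
      have hsum : (as ++ [1]).sum = as.sum + 1 := by simp
      rw [Fpoly_eq_Pfun, hsum, pfun_rec _ (by omega : 2 ≤ as.sum + 1),
        show as.sum + 1 - 2 = as.sum - 1 by omega,
        edgeIdx_fst_base as 1 hpos hodd, edgeIdx_snd_base as 1 hpos hodd]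
      have hsl1 : stepLeft (as ++ [1]) (as.sum + 1) as.dropLast.sum = ∅ := by
        unfold stepLeft
        rw [if_neg]
        rintro ⟨-, h⟩
        rw [show as.sum + 1 - 2 = as.sum - 1 by omega,
          edgeIdx_snd_base as 1 hpos hodd] at h
        omega
      have hsl2 : stepLeft (as ++ [1]) (as.sum + 1) as.sum =
          Finset.Icc as.sum as.sum := by
        unfold stepLeft
        rw [if_pos ⟨by omega, by
          rw [show as.sum + 1 - 2 = as.sum - 1 by omega, edgeIdx_snd_base as 1 hpos hodd]⟩]
        ext i
        simp
        omega
      rw [hsl1, hsl2, pfun_dropLast as 1 hne _ (by omega), pfun_prev as 1 _ (by omega),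
        ← Fpoly_eq_Pfun, ← Fpoly_eq_Pfun, Finset.sum_range_one, Finset.prod_empty]
      rw [show as.sum + 0 = as.sum from rfl]
      ring
  | succ x hx ih =>
      have hsum : (as ++ [x + 1]).sum = as.sum + (x + 1) := by simp
      have hsp := edgeIdx_spine as (x + 1) hpos hodd (by omega) (x - 1) (by omega)
      rw [show as.sum + (x - 1) = as.sum + x - 1 by omega,
        show as.sum + x - 1 + 1 = as.sum + x by omega] at hsp
      rw [Fpoly_eq_Pfun, hsum, pfun_rec _ (by omega : 2 ≤ as.sum + (x + 1)),
        show as.sum + (x + 1) - 2 = as.sum + x - 1 by omega, hsp]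
      dsimp only
      have hsl1 : stepLeft (as ++ [x + 1]) (as.sum + (x + 1)) (as.sum + x) = ∅ := by
        unfold stepLeft
        rw [if_neg]
        rintro ⟨-, h⟩
        rw [show as.sum + (x + 1) - 2 = as.sum + x - 1 by omega, hsp] at h
        dsimp only at h
        omega
      have hsl2 : stepLeft (as ++ [x + 1]) (as.sum + (x + 1)) as.sum =
          Finset.Icc as.sum (as.sum + x) := by
        unfold stepLeft
        rw [if_pos ⟨by omega, by
          rw [show as.sum + (x + 1) - 2 = as.sum + x - 1 by omega, hsp]⟩]
        ext i
        simp
        omega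
      have htr : Pfun (as ++ [x + 1]) (as.sum + x) = Fpoly (as ++ [x]) := by
        rw [← pfun_xx as x hodd hx _ (by omega), Fpoly_eq_Pfun,
          show (as ++ [x]).sum = as.sum + x by simp]
      rw [hsl1, hsl2, htr, ih, pfun_prev as (x + 1) _ (by omega), ← Fpoly_eq_Pfun,
        Finset.sum_range_succ, Finset.prod_empty]
      ring

lemma FpolyC_closed (as : List ℕ) (hpos : ∀ y ∈ as, 0 < y) (hodd : Odd as.length)
    (m : ℕ) :
    FpolyC (as ++ [m]) =
      (∑ k ∈ Finset.range m,
          ∏ i ∈ Finset.Icc as.sum (as.sum + k), (MvPolynomial.X i : MvPolynomial ℕ ℤ)) *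
          Fpoly as +
        Fpoly as.dropLast := by
  cases m with
  | zero =>
      unfold FpolyC
      rw [if_pos (by rw [List.getLast?_concat])]
      rw [List.dropLast_concat]
      simp
  | succ m =>
      unfold FpolyC
      rw [if_neg (by rw [List.getLast?_concat]; simp)]
      exact Fpoly_closed as hpos hodd (m + 1) (by omega)

/-- **Corollary.**  Let `n` be even, `a₁,…,aₙ` positive integers with `aₙ ≥ 2` (the first
`n − 1` entries form the list `as`, `aₙ = an`), `N = a₁ + ⋯ + aₙ − 1` and
`l_{n−1} = a₁ + ⋯ + a_{n−1}`.  Then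
`F[a₁,…,aₙ] = (1 + y_N)·F[a₁,…,a_{n−1}, aₙ − 1] − y_N·F[a₁,…,a_{n−1}, aₙ − 2]` and
`F[a₁,…,aₙ] = (∏_{i=l_{n−1}}^{N−1} y_i)(1 + y_N)·F[a₁,…,a_{n−1}] + F[a₁,…,a_{n−1}, aₙ − 2]`,
with the convention `F[a₁,…,a_{n−1}, 0] = F[a₁,…,a_{n−2}]` (realized by `FpolyC`). -/
theorem F_polynomial_recursion_even (as : List ℕ) (an : ℕ)
    (hpos : ∀ x ∈ as, 0 < x) (han : 2 ≤ an) (heven : Even (as.length + 1)) :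
    Fpoly (as ++ [an]) =
        (1 + MvPolynomial.X ((as ++ [an]).sum - 1)) * Fpoly (as ++ [an - 1]) -
          MvPolynomial.X ((as ++ [an]).sum - 1) * FpolyC (as ++ [an - 2]) ∧
    Fpoly (as ++ [an]) =
        (∏ i ∈ Finset.Icc as.sum ((as ++ [an]).sum - 2),
            (MvPolynomial.X i : MvPolynomial ℕ ℤ)) *
            (1 + MvPolynomial.X ((as ++ [an]).sum - 1)) * Fpoly as +
          FpolyC (as ++ [an - 2]) := by
  obtain ⟨m, rfl⟩ : ∃ m, an = m + 2 := ⟨an - 2, by omega⟩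
  have hodd : Odd as.length := by
    rcases heven with ⟨c, hc⟩
    exact ⟨c - 1, by omega⟩
  have hs : (as ++ [m + 2]).sum = as.sum + (m + 2) := by simp
  rw [hs, show as.sum + (m + 2) - 1 = as.sum + (m + 1) by omega,
    show as.sum + (m + 2) - 2 = as.sum + m by omega,
    show m + 2 - 1 = m + 1 by omega, show m + 2 - 2 = m by omega]
  have h1 := Fpoly_closed as hpos hodd (m + 2) (by omega)
  have h2 := Fpoly_closed as hpos hodd (m + 1) (by omega)
  have h3 := FpolyC_closed as hpos hodd m
  have hM : (∏ i ∈ Finset.Icc as.sum (as.sum + (m + 1)),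
      (MvPolynomial.X i : MvPolynomial ℕ ℤ)) =
      (∏ i ∈ Finset.Icc as.sum (as.sum + m), (MvPolynomial.X i : MvPolynomial ℕ ℤ)) *
        MvPolynomial.X (as.sum + (m + 1)) := by
    rw [show as.sum + (m + 1) = as.sum + m + 1 by omega]
    exact Finset.prod_Icc_succ_top (by omega) _
  rw [h1, h2, h3, Finset.sum_range_succ, Finset.sum_range_succ, hM]
  constructor
  · ring
  · ring

end TwoBridge

end
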